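/- Let R be a commutative ring and M an invertible R-module, i.e., a finitely generated projective R-module whose localization at every prime ideal of R is free of rank 1. Let f, g ∈ M be two elements that generate M, i.e., the R-submodule of M spanned by {f, g} is all of M. Set N = Hom_R(M, R), and consider the R[X]-module N[X] = R[X] ⊗_R N. Let F, G : N[X] → R[X] be the R[X]-linear extensions of the evaluation maps N → R given by φ ↦ φ f and φ ↦ φ g respectively. Then the R[X]-linear map N[X] → N[X] × R[X] × R[X] sending ψ to (X • ψ, F ψ, G ψ) is injective, and its cokernel Q is a finitely generated projective R[X]-module whose localization at every prime ideal of R[X] is free of rank 2; in particular Q is flat over R[X]. -/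

import Mathlib

open TensorProduct

/-- An *invertible module* over a commutative ring `R`: a finitely generated projective
`R`-module whose localization at every prime ideal of `R` is free of rank 1. -/
def IsInvertibleModule (R : Type*) [CommRing R] (M : Type*) [AddCommGroup M]
    [Module R M] : Prop :=
  Module.Finite R M ∧ Module.Projective R M ∧
    ∀ (p : Ideal R) [p.IsPrime],
      Module.Free (Localization.AtPrime p) (LocalizedModule p.primeCompl M) ∧
      Module.finrank (Localization.AtPrime p) (LocalizedModule p.primeCompl M) = 1

section AuxLemmas

variable {R : Type*} [CommRing R] {M : Type*} [AddCommGroup M] [Module R M]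

/-- For an invertible module, the pairing `(φ, x) ↦ φ x` is "symmetric" in the sense that
`φ x * ν y = φ y * ν x`. -/
lemma IsInvertibleModule.mul_symm (hM : IsInvertibleModule R M)
    (φ ν : M →ₗ[R] R) (x y : M) : φ x * ν y = φ y * ν x := by
  rw [← sub_eq_zero]
  apply eq_zero_of_localization
  intro P hP
  haveI : P.IsPrime := hP.isPrime
  haveI hfree := (hM.2.2 P).1
  have hrank := (hM.2.2 P).2
  obtain ⟨e, -, he⟩ := finrank_eq_one_iff'.mp hrank
  set S := P.primeCompl
  let mk : M →ₗ[R] LocalizedModule S M := LocalizedModule.mkLinearMap S M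
  let ℓ : R →ₗ[R] Localization.AtPrime P := Algebra.linearMap R (Localization.AtPrime P)
  let loc : (M →ₗ[R] R) →
      (LocalizedModule S M →ₗ[Localization.AtPrime P] Localization.AtPrime P) :=
    fun ρ => (IsLocalizedModule.map S mk ℓ ρ).extendScalarsOfIsLocalization S _
  have hloc : ∀ (ρ : M →ₗ[R] R) (z : M),
      algebraMap R (Localization.AtPrime P) (ρ z) = loc ρ (mk z) := by
    intro ρ z
    simp only [loc, LinearMap.extendScalarsOfIsLocalization_apply',
      IsLocalizedModule.map_apply]
    rfl
  obtain ⟨α, hα⟩ := he (mk x)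
  obtain ⟨β, hβ⟩ := he (mk y)
  rw [map_sub, map_mul, map_mul, hloc φ x, hloc φ y, hloc ν x, hloc ν y, ← hα, ← hβ,
    map_smul, map_smul, map_smul, map_smul, smul_eq_mul, smul_eq_mul, smul_eq_mul,
    smul_eq_mul]
  ring

/-- For an invertible module with two generators `f, g` there are dual elements
`n₁ n₂ : Hom(M, R)` with `φ f • n₁ + φ g • n₂ = φ` for every `φ`. -/
lemma IsInvertibleModule.exists_dual_pair (hM : IsInvertibleModule R M) (f g : M)
    (hfg : Submodule.span R ({f, g} : Set M) = ⊤) :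
    ∃ n₁ n₂ : M →ₗ[R] R, ∀ φ : M →ₗ[R] R, φ f • n₁ + φ g • n₂ = φ := by
  classical
  haveI := hM.1
  haveI := hM.2.1
  obtain ⟨n, v, hv⟩ := Module.Finite.exists_fin (R := R) (M := M)
  set π : (Fin n →₀ R) →ₗ[R] M := Finsupp.linearCombination R v with hπdef
  have hπ : Function.Surjective π := by
    rw [← LinearMap.range_eq_top, hπdef, Finsupp.range_linearCombination, hv]
  obtain ⟨σ, hσ⟩ := Module.projective_lifting_property π LinearMap.id hπ
  have hab : ∀ i : Fin n, ∃ a b : R, a • f + b • g = v i := by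
    intro i
    have : v i ∈ Submodule.span R ({f, g} : Set M) := hfg ▸ Submodule.mem_top
    exact Submodule.mem_span_pair.mp this
  choose a b hab using hab
  set n₁ : M →ₗ[R] R := ∑ i, a i • ((Finsupp.lapply i).comp σ) with hn₁
  set n₂ : M →ₗ[R] R := ∑ i, b i • ((Finsupp.lapply i).comp σ) with hn₂
  have happ : ∀ (c : Fin n → R) (x : M),
      (∑ i, c i • ((Finsupp.lapply i).comp σ)) x = ∑ i, c i * σ x i := by
    intro c x
    simp [LinearMap.sum_apply, LinearMap.smul_apply, smul_eq_mul]
  have key0 : ∀ x : M, n₁ x • f + n₂ x • g = x := by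
    intro x
    have hx : π (σ x) = x := by
      have := LinearMap.congr_fun hσ x
      simpa using this
    rw [hn₁, hn₂, happ a x, happ b x, Finset.sum_smul, Finset.sum_smul,
      ← Finset.sum_add_distrib]
    have : ∀ i ∈ Finset.univ, (a i * σ x i) • f + (b i * σ x i) • g = σ x i • v i := by
      intro i _
      rw [← hab i, smul_add, smul_smul, smul_smul, mul_comm ((σ x) i) (a i),
        mul_comm ((σ x) i) (b i)]
    have hx2 : π (σ x) = ∑ i, (σ x) i • v i := by
      rw [hπdef, Finsupp.linearCombination_apply, Finsupp.sum_fintype]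
      intro i
      simp
    rw [Finset.sum_congr rfl this, ← hx2, hx]
  refine ⟨n₁, n₂, fun φ => ?_⟩
  ext x
  simp only [LinearMap.add_apply, LinearMap.smul_apply, smul_eq_mul]
  have hC : n₁ x * φ f + n₂ x * φ g = φ x := by
    have := congrArg φ (key0 x)
    rwa [map_add, map_smul, map_smul, smul_eq_mul, smul_eq_mul] at this
  have hA : φ f * n₁ x = φ x * n₁ f := hM.mul_symm φ n₁ f x
  have hB : φ g * n₂ x = φ x * n₂ g := hM.mul_symm φ n₂ g x
  have hA' : n₁ x * φ f = n₁ f * φ x := hM.mul_symm n₁ φ x f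
  have hB' : n₂ x * φ g = n₂ g * φ x := hM.mul_symm n₂ φ x g
  have hC' : n₁ f * φ x + n₂ g * φ x = φ x := by
    rw [← hA', ← hB']; exact hC
  linear_combination hA + hB + hC'

end AuxLemmas

/-- Given `R[X]`-linear maps `F G : N[X] → R[X]` (where `N[X] = R[X] ⊗[R] N` and
`N = Hom_R(M,R)`), the `R[X]`-linear map `N[X] → N[X] × R[X] × R[X]`,
`ψ ↦ (X • ψ, F ψ, G ψ)`. -/
noncomputable def xShiftEvalMap (R : Type*) [CommRing R] (M : Type*) [AddCommGroup M] [Module R M]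
    (F G : (Polynomial R ⊗[R] (M →ₗ[R] R)) →ₗ[Polynomial R] Polynomial R) :
    (Polynomial R ⊗[R] (M →ₗ[R] R)) →ₗ[Polynomial R]
      (Polynomial R ⊗[R] (M →ₗ[R] R)) × Polynomial R × Polynomial R :=
  LinearMap.prod
    ((Polynomial.X : Polynomial R) •
      (LinearMap.id : (Polynomial R ⊗[R] (M →ₗ[R] R)) →ₗ[Polynomial R]
        (Polynomial R ⊗[R] (M →ₗ[R] R))))
    (LinearMap.prod F G)

/-- The cokernel `Q` of the map `ψ ↦ (X • ψ, F ψ, G ψ)`. -/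
abbrev xShiftEvalCoker (R : Type*) [CommRing R] (M : Type*) [AddCommGroup M] [Module R M]
    (F G : (Polynomial R ⊗[R] (M →ₗ[R] R)) →ₗ[Polynomial R] Polynomial R) : Type _ :=
  ((Polynomial R ⊗[R] (M →ₗ[R] R)) × Polynomial R × Polynomial R) ⧸
    LinearMap.range (xShiftEvalMap R M F G)

set_option maxHeartbeats 2000000 in
/-- Let `R` be a commutative ring, `M` an invertible `R`-module and
`f, g ∈ M` generators of `M`. Set `N = Hom_R(M,R)` and let `F, G : N[X] → R[X]` be the
`R[X]`-linear extensions of the evaluation maps `φ ↦ φ f` and `φ ↦ φ g`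
(here `N[X] = R[X] ⊗[R] N`). Then the `R[X]`-linear map `N[X] → N[X] × R[X] × R[X]`,
`ψ ↦ (X • ψ, F ψ, G ψ)`, is injective, and its cokernel `Q` is a finitely generated
projective `R[X]`-module whose localization at every prime ideal of `R[X]` is free of
rank 2; in particular `Q` is flat over `R[X]`. -/
theorem xShiftEvalMap_injective_coker_rank_two (R : Type*) [CommRing R] (M : Type*)
    [AddCommGroup M] [Module R M] (hM : IsInvertibleModule R M) (f g : M)
    (hfg : Submodule.span R ({f, g} : Set M) = ⊤)
    (F G : (Polynomial R ⊗[R] (M →ₗ[R] R)) →ₗ[Polynomial R] Polynomial R)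
    (hF : ∀ φ : M →ₗ[R] R, F ((1 : Polynomial R) ⊗ₜ[R] φ) = Polynomial.C (φ f))
    (hG : ∀ φ : M →ₗ[R] R, G ((1 : Polynomial R) ⊗ₜ[R] φ) = Polynomial.C (φ g)) :
    Function.Injective (xShiftEvalMap R M F G) ∧
    Module.Finite (Polynomial R) (xShiftEvalCoker R M F G) ∧
    Module.Projective (Polynomial R) (xShiftEvalCoker R M F G) ∧
    (∀ (p : Ideal (Polynomial R)) [p.IsPrime],
      Module.Free (Localization.AtPrime p)
        (LocalizedModule p.primeCompl (xShiftEvalCoker R M F G)) ∧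
      Module.finrank (Localization.AtPrime p)
        (LocalizedModule p.primeCompl (xShiftEvalCoker R M F G)) = 2) ∧
    Module.Flat (Polynomial R) (xShiftEvalCoker R M F G) := by
  classical
  obtain ⟨n₁, n₂, hkey⟩ := hM.exists_dual_pair f g hfg
  set P := Polynomial R with hP
  set V := Polynomial R ⊗[R] (M →ₗ[R] R) with hV
  -- the splitting map
  let S' : (Polynomial R × Polynomial R) →ₗ[Polynomial R] V :=
    (LinearMap.toSpanSingleton (Polynomial R) V ((1 : Polynomial R) ⊗ₜ[R] n₁)).coprod
      (LinearMap.toSpanSingleton (Polynomial R) V ((1 : Polynomial R) ⊗ₜ[R] n₂))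
  have hS'mk : ∀ x y : Polynomial R,
      S' (x, y) = x • ((1 : Polynomial R) ⊗ₜ[R] n₁) + y • ((1 : Polynomial R) ⊗ₜ[R] n₂) :=
    fun x y => rfl
  have hC : ∀ (r : R) (ν : M →ₗ[R] R),
      (Polynomial.C r) • ((1 : Polynomial R) ⊗ₜ[R] ν) = (1 : Polynomial R) ⊗ₜ[R] (r • ν) := by
    intro r ν
    have h1 : (Polynomial.C r) • ((1 : Polynomial R) ⊗ₜ[R] ν)
        = (Polynomial.C r * 1) ⊗ₜ[R] ν := by
      rw [smul_tmul', smul_eq_mul]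
    have h2 : (Polynomial.C r * 1 : Polynomial R) = r • (1 : Polynomial R) := by
      rw [Algebra.smul_def, Polynomial.algebraMap_eq]
    rw [h1, h2, smul_tmul]
  have hsec : ∀ ψ : V, S' (F ψ, G ψ) = ψ := by
    intro ψ
    induction ψ using TensorProduct.induction_on with
    | zero => simp; exact map_zero S'
    | add u w hu hw =>
      have h : ((F (u + w), G (u + w)) : Polynomial R × Polynomial R)
          = (F u, G u) + (F w, G w) := by
        simp [Prod.ext_iff]
      rw [h, map_add, hu, hw]
    | tmul p φ =>
      have hp : (p ⊗ₜ[R] φ : V) = p • ((1 : Polynomial R) ⊗ₜ[R] φ) := by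
        rw [smul_tmul', smul_eq_mul, mul_one]
      rw [hp, map_smul, map_smul, hF, hG]
      have h : ((p • Polynomial.C (φ f), p • Polynomial.C (φ g)) : Polynomial R × Polynomial R)
          = p • (Polynomial.C (φ f), Polynomial.C (φ g)) := rfl
      rw [h, map_smul, hS'mk, hC, hC, ← TensorProduct.tmul_add, hkey φ]
  -- the map under study
  set i := xShiftEvalMap R M F G with hidef
  set T : V →ₗ[Polynomial R] Polynomial R × Polynomial R := LinearMap.prod F G with hTdef
  have hT : ∀ ψ : V, T ψ = (F ψ, G ψ) := fun ψ => rfl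
  have hi : ∀ ψ : V, i ψ = ((Polynomial.X : Polynomial R) • ψ, T ψ) := fun ψ => by
    simp [hidef, xShiftEvalMap, hT]
  have hST : ∀ ψ : V, S' (T ψ) = ψ := fun ψ => hsec ψ
  have hinj : Function.Injective i := by
    intro u w huw
    have h2 : T u = T w := congrArg Prod.snd huw
    calc u = S' (T u) := (hST u).symm
      _ = S' (T w) := by rw [h2]
      _ = w := hST w
  -- the projection with kernel equal to the range of `i`
  let A : (V × Polynomial R × Polynomial R) →ₗ[Polynomial R] V :=
    LinearMap.fst (Polynomial R) V (Polynomial R × Polynomial R)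
  let B : (V × Polynomial R × Polynomial R) →ₗ[Polynomial R] Polynomial R × Polynomial R :=
    LinearMap.snd (Polynomial R) V (Polynomial R × Polynomial R)
  let π : (V × Polynomial R × Polynomial R) →ₗ[Polynomial R] Polynomial R × Polynomial R :=
    T ∘ₗ A + (B - T ∘ₗ S' ∘ₗ B - (Polynomial.X : Polynomial R) • (T ∘ₗ S' ∘ₗ B))
  have hπ : ∀ w : V × Polynomial R × Polynomial R,
      π w = T w.1 + (w.2 - T (S' w.2) - (Polynomial.X : Polynomial R) • T (S' w.2)) := fun w => rfl
  have hkerπ : LinearMap.ker π = LinearMap.range i := by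
    apply le_antisymm
    · intro w hw
      rw [LinearMap.mem_ker, hπ] at hw
      have h1 : w.1 = (Polynomial.X : Polynomial R) • S' w.2 := by
        have := congrArg S' hw
        rw [map_add, map_sub, map_sub, map_smul, hST, hST, map_zero] at this
        have h' : w.1 + (S' w.2 - S' w.2 - (Polynomial.X : Polynomial R) • S' w.2) = 0 := this
        rw [sub_self, zero_sub] at h'
        have := add_eq_zero_iff_eq_neg.mp h'
        rw [this, neg_neg]
      have h2 : w.2 = T (S' w.2) := by
        rw [h1, map_smul] at hw
        have h' : (Polynomial.X : Polynomial R) • T (S' w.2) +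
            (w.2 - T (S' w.2) - (Polynomial.X : Polynomial R) • T (S' w.2)) = 0 := hw
        have : w.2 - T (S' w.2) = 0 := by
          rw [← h']; abel
        rw [sub_eq_zero] at this
        exact this
      refine ⟨S' w.2, ?_⟩
      rw [hi, ← h1, ← h2]
    · rintro _ ⟨ψ, rfl⟩
      rw [LinearMap.mem_ker, hπ, hi]
      simp only
      rw [hST, map_smul]
      abel
  have hsurjπ : Function.Surjective π := by
    intro w
    refine ⟨((Polynomial.X : Polynomial R) • S' w + S' w, w), ?_⟩
    rw [hπ]
    simp only
    rw [map_add, map_smul]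
    abel
  -- the equivalence of the cokernel with `P × P`
  let e : xShiftEvalCoker R M F G ≃ₗ[Polynomial R] Polynomial R × Polynomial R :=
    (Submodule.quotEquivOfEq _ _ hkerπ.symm).trans (π.quotKerEquivOfSurjective hsurjπ)
  haveI hfree : Module.Free (Polynomial R) (xShiftEvalCoker R M F G) :=
    Module.Free.of_equiv e.symm
  haveI hfin : Module.Finite (Polynomial R) (xShiftEvalCoker R M F G) :=
    Module.Finite.equiv e.symm
  refine ⟨hinj, hfin, Module.Projective.of_free, ?_, Module.Flat.of_free⟩
  intro p hp
  haveI : Nontrivial (Polynomial R) := by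
    rcases subsingleton_or_nontrivial (Polynomial R) with h | h
    · exact absurd (Subsingleton.elim p ⊤) hp.ne_top
    · exact h
  constructor
  · exact Module.free_of_isLocalizedModule p.primeCompl
      (LocalizedModule.mkLinearMap p.primeCompl _)
  · rw [Module.finrank_of_isLocalizedModule_of_free _ p.primeCompl
      (LocalizedModule.mkLinearMap p.primeCompl _)]
    rw [e.finrank_eq, Module.finrank_prod, Module.finrank_self]
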